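/- arXiv:2504.12716 — 4 statements merged into one kernel-verified Lean document; each statement's English description precedes it below -/
import Mathlib

section
/- Let ε ∈ (-1,1), let X,Y,Z ∈ ℝ, set A = (Y+iX)/2, and suppose there are w ∈ ℂ with |w| = 1 and t ∈ ℝ with |t| ≥ 1 such that (A·w + Z - conj(A)·w⁻¹)² = -t²·Q(w). Then Z = 0 and X²/(1+ε) + Y²/(1-ε) ≥ 1; that is, the point (X,Y,Z) lies in the closure of W_∞. -/
/-- `Q(w) = 1 + (ε/2)(w² + w⁻²)`. -/
noncomputable def Qc (ε : ℝ) (w : ℂ) : ℂ := 1 + (ε/2 : ℝ) * (w^2 + w⁻¹^2)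

theorem stmt_1 (ε : ℝ) (hε : ε ∈ Set.Ioo (-1:ℝ) 1) (X Y Z : ℝ)
    (A : ℂ) (hA : A = ((Y : ℂ) + Complex.I * X) / 2)
    (h : ∃ w : ℂ, ‖w‖ = 1 ∧ ∃ t : ℝ, 1 ≤ |t| ∧
      (A * w + (Z : ℂ) - (starRingEnd ℂ) A * w⁻¹)^2 = -(t^2 : ℝ) * Qc ε w) :
    Z = 0 ∧ 1 ≤ X^2/(1+ε) + Y^2/(1-ε) := by
  obtain ⟨w, habs, t, ht, heq⟩ := h
  have hw : w⁻¹ = (starRingEnd ℂ) w := Complex.inv_eq_conj habs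
  have hnorm : Complex.normSq w = 1 := by rw [Complex.normSq_eq_norm_sq, habs]; norm_num
  rw [Complex.normSq_apply] at hnorm
  have hAre : A.re = Y/2 := by simp [hA]
  have hAim : A.im = X/2 := by simp [hA]
  set c := w.re with hcdef
  set s := w.im with hsdef
  have hc : c^2 + s^2 = 1 := by nlinarith [hnorm]
  simp only [Qc] at heq
  rw [hw] at heq
  rw [Complex.ext_iff] at heq
  obtain ⟨hre, him⟩ := heq
  simp [Complex.mul_re, Complex.mul_im, Complex.conj_re, Complex.conj_im, hAre, hAim,
    pow_two] at hre him
  have him' : Z * (X*c + Y*s) = 0 := by linear_combination him / 2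
  have hre' : Z^2 - (X*c + Y*s)^2 = -(t^2 * (1 + ε*(c^2 - s^2))) := by
    linear_combination hre
  clear hre him hw habs hnorm hA hAre hAim
  have hp : (0:ℝ) < 1 + ε := by linarith [hε.1]
  have hm : (0:ℝ) < 1 - ε := by linarith [hε.2]
  have ht2 : 1 ≤ t^2 := by nlinarith [sq_abs t]
  have hq : 0 < 1 + ε*(c^2 - s^2) := by
    rcases le_or_gt 0 ε with h0 | h0
    · nlinarith [mul_nonneg h0 (sq_nonneg c)]
    · nlinarith [mul_nonneg (neg_nonneg.mpr h0.le) (sq_nonneg s)]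
  have hZ : Z = 0 := by
    rcases mul_eq_zero.mp him' with h0 | h0
    · exact h0
    · exfalso
      rw [h0] at hre'
      nlinarith [sq_nonneg Z, mul_pos (lt_of_lt_of_le one_pos ht2) hq]
  refine ⟨hZ, ?_⟩
  subst hZ
  have key : 1 + ε*(c^2 - s^2) ≤ (X*c + Y*s)^2 := by
    nlinarith [hre', mul_le_mul_of_nonneg_right ht2 hq.le]
  have hq2 : 1 + ε*(c^2 - s^2) = (1+ε)*c^2 + (1-ε)*s^2 := by linear_combination (-1 : ℝ) * hc
  have cs : (X*c + Y*s)^2 * ((1+ε)*(1-ε)) ≤ (X^2*(1-ε) + Y^2*(1+ε)) * (1 + ε*(c^2 - s^2)) := by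
    rw [hq2]
    nlinarith [sq_nonneg (X*(1-ε)*s - Y*(1+ε)*c)]
  have main : (1+ε)*(1-ε) ≤ X^2*(1-ε) + Y^2*(1+ε) := by
    have h1 : (1 + ε*(c^2 - s^2)) * ((1+ε)*(1-ε)) ≤ (X^2*(1-ε) + Y^2*(1+ε)) * (1 + ε*(c^2 - s^2)) :=
      le_trans (mul_le_mul_of_nonneg_right key (mul_pos hp hm).le) cs
    have h2 := (mul_le_mul_iff_of_pos_right hq).mp
      (by linarith : (1+ε)*(1-ε) * (1 + ε*(c^2 - s^2)) ≤ (X^2*(1-ε) + Y^2*(1+ε)) * (1 + ε*(c^2 - s^2)))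
    exact h2
  rw [div_add_div _ _ hp.ne' hm.ne', le_div_iff₀ (by positivity)]
  nlinarith [main]
end

section
/- Let ε ∈ (-1,1) and let (X,Y) ∈ ℝ² satisfy X²/(1+ε) + Y²/(1-ε) > 1; set A = (Y+iX)/2. Then the set of solutions w ∈ ℂ, w ≠ 0, of the equation Q(w) + (A·w - conj(A)·w⁻¹)² = 0 consists of exactly four points, all of modulus 1, and they form two antipodal pairs {w₁, -w₁, w₂, -w₂} with w₁² ≠ w₂². -/
open Complex

theorem stmt_5 (ε : ℝ) (hε : ε ∈ Set.Ioo (-1:ℝ) 1) (X Y : ℝ)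
    (hW : 1 < X^2/(1+ε) + Y^2/(1-ε))
    (A : ℂ) (hA : A = ((Y : ℂ) + Complex.I * X) / 2) :
    ∃ w₁ w₂ : ℂ, ‖w₁‖ = 1 ∧ ‖w₂‖ = 1 ∧ w₁^2 ≠ w₂^2 ∧
      {w : ℂ | w ≠ 0 ∧ Qc ε w + (A * w - (starRingEnd ℂ) A * w⁻¹)^2 = 0}
        = {w₁, -w₁, w₂, -w₂} := by
  obtain ⟨hε1, hε2⟩ := hε
  obtain ⟨ar, har⟩ : ∃ x : ℝ, x = ε/2 + (Y^2 - X^2)/4 := ⟨_, rfl⟩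
  obtain ⟨ai, hai⟩ : ∃ x : ℝ, x = X*Y/2 := ⟨_, rfl⟩
  obtain ⟨br, hbr⟩ : ∃ x : ℝ, x = 1 - (X^2+Y^2)/2 := ⟨_, rfl⟩
  obtain ⟨D, hDdef⟩ : ∃ x : ℝ, x = 4*(ar^2+ai^2) - br^2 := ⟨_, rfl⟩
  have h1p : (1:ℝ)+ε ≠ 0 := by linarith
  have h1m : (1:ℝ)-ε ≠ 0 := by linarith
  have hDid : D = (1-ε^2)*(X^2/(1+ε)+Y^2/(1-ε)-1) := by
    rw [hDdef, har, hai, hbr]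
    field_simp
    ring
  have hD : 0 < D := by
    rw [hDid]
    have h1 : 0 < 1 - ε^2 := by nlinarith
    have h2 : 0 < X^2/(1+ε)+Y^2/(1-ε)-1 := by linarith
    exact mul_pos h1 h2
  obtain ⟨s, hsdef⟩ : ∃ x : ℝ, x = Real.sqrt D := ⟨_, rfl⟩
  have hs : s^2 = D := by rw [hsdef]; exact Real.sq_sqrt hD.le
  have hspos : 0 < s := by rw [hsdef]; exact Real.sqrt_pos.mpr hD
  obtain ⟨a, hadef⟩ : ∃ x : ℂ, x = (ar:ℂ) + ai*I := ⟨_, rfl⟩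
  have hans : Complex.normSq a = ar^2 + ai^2 := by
    rw [hadef]; exact Complex.normSq_add_mul_I ar ai
  have hapos : 0 < ar^2 + ai^2 := by nlinarith [sq_nonneg br, hs, hspos]
  have ha : a ≠ 0 := by
    intro h
    rw [h, map_zero] at hans
    nlinarith
  have hconj : (starRingEnd ℂ) a = (ar:ℂ) - ai*I := by
    rw [hadef]
    simp [map_add, map_mul, Complex.conj_I, Complex.conj_ofReal]
    ring
  obtain ⟨z₁, hz1⟩ : ∃ x : ℂ, x = (-(br:ℂ) + s*I)/(2*a) := ⟨_, rfl⟩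
  obtain ⟨z₂, hz2⟩ : ∃ x : ℂ, x = (-(br:ℂ) - s*I)/(2*a) := ⟨_, rfl⟩
  have hsC : (s:ℂ)^2 = 4*((ar:ℂ)^2+(ai:ℂ)^2) - (br:ℂ)^2 := by
    have := congrArg (fun t : ℝ => (t:ℂ)) (hs.trans hDdef)
    push_cast at this
    exact_mod_cast hs.trans hDdef
  have e1 : (-(br:ℂ)+s*I)*(-(br:ℂ)-s*I) = 4*((ar:ℂ)^2+(ai:ℂ)^2) := by
    linear_combination (-(s:ℂ)^2) * Complex.I_sq + hsC
  have e2 : a * (starRingEnd ℂ) a = ((ar:ℂ)^2+(ai:ℂ)^2) := by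
    rw [hconj, hadef]
    linear_combination (-(ai:ℂ)^2) * Complex.I_sq
  have hsum : a*(z₁+z₂) = -(br:ℂ) := by
    rw [hz1, hz2]; field_simp; ring
  have hprod : a*(z₁*z₂) = (starRingEnd ℂ) a := by
    have h4 : z₁*z₂ = (4*((ar:ℂ)^2+(ai:ℂ)^2))/(4*a^2) := by
      rw [hz1, hz2, div_mul_div_comm, e1]
      congr 1
      ring
    rw [h4, ← e2]
    field_simp
  have poly : ∀ w : ℂ, a*(w^2-z₁)*(w^2-z₂) = a*w^4 + br*w^2 + (starRingEnd ℂ) a := by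
    intro w
    linear_combination (-(w^2)) * hsum + hprod
  -- relate a, br, conj a to A
  have hB : (starRingEnd ℂ) A = ((Y:ℂ) - I*X)/2 := by
    rw [hA]
    simp [map_div₀, map_add, map_mul, Complex.conj_I, Complex.conj_ofReal, map_ofNat]
    ring
  have heq1 : ((ε/2 : ℝ) : ℂ) + A^2 = a := by
    rw [hA, hadef, har, hai]
    push_cast
    linear_combination ((X:ℂ)^2/4) * Complex.I_sq
  have heq2 : (br:ℂ) = 1 - 2*(A*(starRingEnd ℂ) A) := by
    rw [hbr, hB, hA]
    push_cast
    linear_combination (-(X:ℂ)^2/2) * Complex.I_sq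
  have heq3 : (starRingEnd ℂ) a = ((ε/2 : ℝ) : ℂ) + ((starRingEnd ℂ) A)^2 := by
    rw [hconj, hB, har, hai]
    push_cast
    linear_combination (-(X:ℂ)^2/4) * Complex.I_sq
  have key : ∀ w : ℂ, w ≠ 0 →
      Qc ε w + (A * w - (starRingEnd ℂ) A * w⁻¹)^2 = (a*(w^2-z₁)*(w^2-z₂))/w^2 := by
    intro w hw
    rw [poly w, heq3, heq2, ← heq1]
    simp only [Qc]
    field_simp
    ring
  -- roots
  obtain ⟨w₁, hw₁⟩ := IsAlgClosed.exists_pow_nat_eq (k := ℂ) z₁ zero_lt_two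
  obtain ⟨w₂, hw₂⟩ := IsAlgClosed.exists_pow_nat_eq (k := ℂ) z₂ zero_lt_two
  have hnsq : ∀ t : ℝ, Complex.normSq (-(br:ℂ) + t*I) = br^2 + t^2 := by
    intro t
    have h : -(br:ℂ) + t*I = ((-br : ℝ):ℂ) + (t:ℝ)*I := by push_cast; ring
    rw [h, Complex.normSq_add_mul_I]; ring
  have hnz : ∀ t : ℝ, t^2 = s^2 → Complex.normSq ((-(br:ℂ) + t*I)/(2*a)) = 1 := by
    intro t ht
    rw [map_div₀, map_mul, hans, hnsq]
    have h2 : Complex.normSq 2 = 4 := by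
      norm_num [Complex.normSq_apply]
    rw [h2, ht, hs, hDdef]
    field_simp
    ring
  have hz1n : Complex.normSq z₁ = 1 := by rw [hz1]; exact hnz s rfl
  have hz2n : Complex.normSq z₂ = 1 := by
    have h : z₂ = (-(br:ℂ) + ((-s : ℝ):ℂ)*I)/(2*a) := by rw [hz2]; push_cast; ring_nf
    rw [h]
    exact hnz (-s) (by ring)
  have habs : ∀ (w : ℂ) (z : ℂ), w^2 = z → Complex.normSq z = 1 → ‖w‖ = 1 := by
    intro w z hwz hzn
    have h1 : ‖z‖ = 1 := by
      rw [Complex.norm_def, hzn, Real.sqrt_one]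
    have h2 : ‖w‖^2 = 1 := by
      rw [← norm_pow, hwz, h1]
    have h3 : (‖w‖ - 1) * (‖w‖ + 1) = 0 := by linear_combination h2
    rcases mul_eq_zero.mp h3 with h' | h'
    · exact sub_eq_zero.mp h'
    · have h4 := norm_nonneg w
      linarith
  have habs1 : ‖w₁‖ = 1 := habs w₁ z₁ hw₁ hz1n
  have habs2 : ‖w₂‖ = 1 := habs w₂ z₂ hw₂ hz2n
  have hw1ne : w₁ ≠ 0 := by
    intro h; rw [h] at habs1; simp at habs1
  have hw2ne : w₂ ≠ 0 := by
    intro h; rw [h] at habs2; simp at habs2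
  have hzne : z₁ ≠ z₂ := by
    intro h
    rw [hz1, hz2, div_eq_div_iff (by simpa using ha) (by simpa using ha)] at h
    have h2 : ((s:ℂ)*I) * (2*a) = 0 := by linear_combination h/2
    rcases mul_eq_zero.mp h2 with h' | h'
    · rcases mul_eq_zero.mp h' with h'' | h''
      · exact hspos.ne' (by exact_mod_cast h'')
      · exact Complex.I_ne_zero h''
    · rcases mul_eq_zero.mp h' with h'' | h''
      · norm_num at h''
      · exact ha h''
  refine ⟨w₁, w₂, habs1, habs2, by rw [hw₁, hw₂]; exact hzne, ?_⟩
  ext w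
  simp only [Set.mem_setOf_eq, Set.mem_insert_iff, Set.mem_singleton_iff]
  constructor
  · rintro ⟨hw0, heqn⟩
    rw [key w hw0] at heqn
    have hnum : a*(w^2-z₁)*(w^2-z₂) = 0 := by
      rcases div_eq_zero_iff.mp heqn with h | h
      · exact h
      · exact absurd h (pow_ne_zero 2 hw0)
    have hc : w^2 = z₁ ∨ w^2 = z₂ := by
      rcases mul_eq_zero.mp hnum with h | h
      · rcases mul_eq_zero.mp h with h' | h'
        · exact absurd h' ha
        · exact Or.inl (sub_eq_zero.mp h')
      · exact Or.inr (sub_eq_zero.mp h)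
    rcases hc with h | h
    · have hf : (w - w₁)*(w + w₁) = 0 := by linear_combination h - hw₁
      rcases mul_eq_zero.mp hf with h' | h'
      · exact Or.inl (sub_eq_zero.mp h')
      · exact Or.inr (Or.inl (eq_neg_of_add_eq_zero_left h'))
    · have hf : (w - w₂)*(w + w₂) = 0 := by linear_combination h - hw₂
      rcases mul_eq_zero.mp hf with h' | h'
      · exact Or.inr (Or.inr (Or.inl (sub_eq_zero.mp h')))
      · exact Or.inr (Or.inr (Or.inr (eq_neg_of_add_eq_zero_left h')))
  · have solve : ∀ v : ℂ, v ≠ 0 → (v^2 = z₁ ∨ v^2 = z₂) →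
        v ≠ 0 ∧ Qc ε v + (A * v - (starRingEnd ℂ) A * v⁻¹)^2 = 0 := by
      intro v hv hvz
      refine ⟨hv, ?_⟩
      rw [key v hv]
      rcases hvz with h | h
      · rw [h]; simp
      · rw [h]; simp
    rintro (h | h | h | h) <;> rw [h]
    · exact solve w₁ hw1ne (Or.inl hw₁)
    · exact solve (-w₁) (neg_ne_zero.mpr hw1ne) (Or.inl (by rw [neg_sq]; exact hw₁))
    · exact solve w₂ hw2ne (Or.inr hw₂)
    · exact solve (-w₂) (neg_ne_zero.mpr hw2ne) (Or.inr (by rw [neg_sq]; exact hw₂))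
end

section
/- Let N be a natural number and let c_{-N}, …, c_N be complex numbers, not all zero, and let P(w) = Σ_{j=-N}^{N} c_j·w^j for w ∈ ℂ with w ≠ 0. Then the function θ ↦ log |P(e^{iθ})| is absolutely integrable on [0, 2π], i.e. ∫₀^{2π} |log |P(e^{iθ})|| dθ < ∞. -/
open Real MeasureTheory intervalIntegral Set Polynomial

-- L1
lemma absExpI (θ : ℝ) : ‖(Complex.exp (Complex.I * θ))‖ = 1 := by
  rw [mul_comm]; exact Complex.norm_exp_ofReal_mul_I θ

-- L2
lemma absExpSub (θ θ₀ : ℝ) :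
    ‖(Complex.exp (Complex.I * θ) - Complex.exp (Complex.I * θ₀))‖
      = 2 * |Real.sin ((θ - θ₀)/2)| := by
  have h1 : Complex.exp (Complex.I * θ) - Complex.exp (Complex.I * θ₀)
      = Complex.exp (Complex.I * θ₀) * (Complex.exp (Complex.I * (θ - θ₀ : ℝ)) - 1) := by
    rw [mul_sub, ← Complex.exp_add, mul_one]
    push_cast
    ring_nf
  rw [h1, norm_mul, absExpI, one_mul]
  have h2 : Complex.exp (Complex.I * (θ - θ₀ : ℝ)) - 1
      = Complex.mk (Real.cos (θ - θ₀) - 1) (Real.sin (θ - θ₀)) := by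
    rw [mul_comm, Complex.exp_mul_I]
    rw [← Complex.ofReal_cos, ← Complex.ofReal_sin]
    apply Complex.ext <;>
      simp [← Complex.ofReal_sub, Complex.cos_ofReal_re, Complex.sin_ofReal_re,
        Complex.cos_ofReal_im, Complex.sin_ofReal_im]
  rw [h2, Complex.norm_def, Complex.normSq_mk]
  rw [Real.abs_sin_half]
  rw [show (Real.cos (θ-θ₀) - 1) * (Real.cos (θ-θ₀) - 1) + Real.sin (θ-θ₀) * Real.sin (θ-θ₀)
       = 4 * ((1 - Real.cos (θ-θ₀))/2) by
    have := Real.sin_sq_add_cos_sq (θ - θ₀); nlinarith]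
  rw [show (4:ℝ) * ((1 - Real.cos (θ-θ₀))/2) = 2^2 * ((1 - Real.cos (θ-θ₀))/2) by norm_num]
  rw [Real.sqrt_mul (by positivity), Real.sqrt_sq (by norm_num)]

-- |log y| ≤ 2 y^½ + 2 y^{-½} for y > 0
lemma abs_log_le (y : ℝ) (hy : 0 < y) :
    |Real.log y| ≤ 2 * y ^ ((2:ℝ)⁻¹) + 2 * y ^ (-(2:ℝ)⁻¹) := by
  have key : ∀ z : ℝ, 0 < z → Real.log z ≤ 2 * z ^ ((2:ℝ)⁻¹) := by
    intro z hz
    have h1 : Real.log (z ^ ((2:ℝ)⁻¹)) = (2:ℝ)⁻¹ * Real.log z := Real.log_rpow hz _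
    have h2 : Real.log (z ^ ((2:ℝ)⁻¹)) ≤ z ^ ((2:ℝ)⁻¹) - 1 :=
      Real.log_le_sub_one_of_pos (Real.rpow_pos_of_pos hz _)
    nlinarith [Real.rpow_pos_of_pos hz ((2:ℝ)⁻¹)]
  rcases abs_cases (Real.log y) with ⟨h, _⟩ | ⟨h, _⟩
  · rw [h]
    have := key y hy
    have := Real.rpow_pos_of_pos hy (-(2:ℝ)⁻¹)
    linarith
  · rw [h]
    have h3 : -Real.log y = Real.log y⁻¹ := (Real.log_inv y).symm
    have := key y⁻¹ (inv_pos.2 hy)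
    rw [Real.inv_rpow hy.le, ← Real.rpow_neg hy.le] at this
    have := Real.rpow_pos_of_pos hy ((2:ℝ)⁻¹)
    linarith [h3 ▸ ‹-Real.log y = Real.log y⁻¹›]

lemma abs_rpow_split (x : ℝ) (c : ℝ) (hc : Real.cos (c * Real.pi) = 0) :
    |x| ^ c = x ^ c + (-x) ^ c := by
  rcases lt_trichotomy x 0 with h | h | h
  · rw [abs_of_neg h, Real.rpow_def_of_neg h, hc, mul_zero, zero_add]
  · subst h
    have hc0 : c ≠ 0 := fun h => by simp [h] at hc
    simp [Real.zero_rpow hc0]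
  · rw [abs_of_pos h, Real.rpow_def_of_neg (by linarith : -x < 0), hc, mul_zero, add_zero]

lemma cos_half_pi' : Real.cos ((2:ℝ)⁻¹ * Real.pi) = 0 := by
  rw [show (2:ℝ)⁻¹ * Real.pi = Real.pi / 2 by ring]; exact Real.cos_pi_div_two

lemma cos_neg_half_pi' : Real.cos (-(2:ℝ)⁻¹ * Real.pi) = 0 := by
  rw [show -(2:ℝ)⁻¹ * Real.pi = -(Real.pi / 2) by ring, Real.cos_neg]
  exact Real.cos_pi_div_two

lemma intervalIntegrable_abs_log_abs (a b : ℝ) :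
    IntervalIntegrable (fun x => |Real.log (|x|)|) volume a b := by
  have hg : IntervalIntegrable
      (fun x => 2 * (x ^ ((2:ℝ)⁻¹) + (-x) ^ ((2:ℝ)⁻¹))
        + 2 * (x ^ (-(2:ℝ)⁻¹) + (-x) ^ (-(2:ℝ)⁻¹))) volume a b := by
    have h1 : IntervalIntegrable (fun x : ℝ => x ^ ((2:ℝ)⁻¹)) volume a b :=
      intervalIntegrable_rpow' (by norm_num)
    have h2 : IntervalIntegrable (fun x : ℝ => x ^ (-(2:ℝ)⁻¹)) volume a b :=
      intervalIntegrable_rpow' (by norm_num)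
    have h1' : IntervalIntegrable (fun x : ℝ => (-x) ^ ((2:ℝ)⁻¹)) volume a b := by
      have := (IntervalIntegrable.iff_comp_neg (by simp)).mp
        (intervalIntegrable_rpow' (by norm_num) :
          IntervalIntegrable (fun x : ℝ => x ^ ((2:ℝ)⁻¹)) volume (-a) (-b))
      simpa using this
    have h2' : IntervalIntegrable (fun x : ℝ => (-x) ^ (-(2:ℝ)⁻¹)) volume a b := by
      have := (IntervalIntegrable.iff_comp_neg (by simp)).mp
        (intervalIntegrable_rpow' (by norm_num) :
          IntervalIntegrable (fun x : ℝ => x ^ (-(2:ℝ)⁻¹)) volume (-a) (-b))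
      simpa using this
    exact (((h1.add h1').const_mul 2).add ((h2.add h2').const_mul 2))
  apply hg.mono_fun
  · exact ((Real.measurable_log.comp measurable_abs).abs).aestronglyMeasurable
  · filter_upwards with x
    rw [Real.norm_eq_abs, Real.norm_eq_abs, abs_abs]
    rcases eq_or_ne x 0 with rfl | hx
    · simp [Real.log_zero]
    · have hx' : 0 < |x| := abs_pos.2 hx
      have := abs_log_le |x| hx'
      rw [abs_rpow_split x _ cos_half_pi', abs_rpow_split x _ cos_neg_half_pi'] at this
      calc |Real.log (|x|)| ≤ 2 * (x ^ ((2:ℝ)⁻¹) + (-x) ^ ((2:ℝ)⁻¹))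
            + 2 * (x ^ (-(2:ℝ)⁻¹) + (-x) ^ (-(2:ℝ)⁻¹)) := by linarith
        _ ≤ |_| := le_abs_self _

lemma meas_aux (r : ℂ) (s : Set ℝ) :
    AEStronglyMeasurable (fun θ : ℝ => |Real.log (‖(Complex.exp (Complex.I * θ) - r)‖)|)
      (volume.restrict s) := by
  have hF : Continuous fun θ : ℝ => ‖(Complex.exp (Complex.I * θ) - r)‖ :=
    (continuous_norm.comp
      ((Complex.continuous_exp.comp (continuous_const.mul Complex.continuous_ofReal)).sub
        continuous_const))
  exact ((Real.measurable_log.comp hF.measurable).abs).aestronglyMeasurable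

lemma core' (r : ℂ) :
    IntervalIntegrable (fun θ : ℝ => |Real.log (‖(Complex.exp (Complex.I * θ) - r)‖)|)
      volume 0 (2*Real.pi) := by
  set G := fun θ : ℝ => |Real.log (‖(Complex.exp (Complex.I * θ) - r)‖)| with hGdef
  by_cases h1 : ‖r‖ = 1
  · -- unit circle case
    set θ₀ := Complex.arg r with hθ₀
    have hr : r = Complex.exp (Complex.I * θ₀) := by
      conv_lhs => rw [← Complex.norm_mul_exp_arg_mul_I r]
      rw [h1, Complex.ofReal_one, one_mul, mul_comm]
    have hF : ∀ θ : ℝ, ‖(Complex.exp (Complex.I * θ) - r)‖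
        = 2 * |Real.sin ((θ - θ₀)/2)| := by
      intro θ; rw [hr, absExpSub]
    have pi_pos := Real.pi_pos
    have hb1 : θ₀ ≤ π := Complex.arg_le_pi r
    have hb2 : -π < θ₀ := Complex.neg_pi_lt_arg r
    -- Step 1 : integrable on [θ₀ - π, θ₀ + π]
    have step1 : IntervalIntegrable G volume (θ₀ - π) (θ₀ + π) := by
      have hg : IntervalIntegrable
          (fun θ => |Real.log 2| + |Real.log (2/π)| + |Real.log (|θ - θ₀|)|)
          volume (θ₀ - π) (θ₀ + π) := by
        have := (intervalIntegrable_abs_log_abs (-π) π).comp_sub_right θ₀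
        have h' : IntervalIntegrable (fun x => |Real.log (|x - θ₀|)|)
            volume (θ₀ - π) (θ₀ + π) := by
          rw [show θ₀ - π = -π + θ₀ by ring, show θ₀ + π = π + θ₀ by ring]; exact this
        exact (intervalIntegrable_const.add h')
      apply hg.mono_fun (meas_aux r _)
      rw [Set.uIoc_of_le (by linarith : θ₀ - π ≤ θ₀ + π)]
      filter_upwards [ae_restrict_mem measurableSet_Ioc] with θ hθ
      have hd : |θ - θ₀| ≤ π := by
        rw [abs_le]; constructor <;> [linarith [hθ.1]; linarith [hθ.2]]
      rw [Real.norm_eq_abs, Real.norm_eq_abs, abs_abs, hF]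
      rcases eq_or_ne θ θ₀ with rfl | hne
      · simp [Real.log_zero]
      · have hs : 0 < |θ - θ₀| := abs_pos.2 (sub_ne_zero.2 hne)
        have hlow : (2/π) * |θ - θ₀| ≤ 2 * |Real.sin ((θ - θ₀)/2)| := by
          have := Real.mul_abs_le_abs_sin (x := (θ - θ₀)/2)
            (by rw [abs_div, abs_of_pos (by norm_num : (0:ℝ) < 2)]; linarith [hd])
          calc (2/π) * |θ - θ₀| = 2 * (2/π * |(θ - θ₀)/2|) := by
                rw [abs_div, abs_of_pos (by norm_num : (0:ℝ) < 2)]; ring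
            _ ≤ 2 * |Real.sin ((θ - θ₀)/2)| := by linarith [this]
        have hup : 2 * |Real.sin ((θ - θ₀)/2)| ≤ 2 := by
          have := abs_sin_le_one ((θ - θ₀)/2)  -- maybe wrong name
          linarith
        have hlowpos : 0 < (2/π) * |θ - θ₀| := by positivity
        have key : |Real.log (2 * |Real.sin ((θ - θ₀)/2)|)|
            ≤ |Real.log 2| + |Real.log ((2/π) * |θ - θ₀|)| := by
          rcases abs_cases (Real.log (2 * |Real.sin ((θ - θ₀)/2)|)) with ⟨he, hpos⟩ | ⟨he, hneg⟩
          · rw [he]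
            have : Real.log (2 * |Real.sin ((θ - θ₀)/2)|) ≤ Real.log 2 :=
              Real.log_le_log (by linarith) hup
            have := abs_nonneg (Real.log ((2/π) * |θ - θ₀|))
            have := le_abs_self (Real.log 2)
            linarith
          · rw [he]
            have hmono : Real.log ((2/π) * |θ - θ₀|) ≤ Real.log (2 * |Real.sin ((θ - θ₀)/2)|) :=
              Real.log_le_log hlowpos hlow
            have := neg_abs_le (Real.log ((2/π) * |θ - θ₀|))
            have := abs_nonneg (Real.log 2)
            linarith
        have split : |Real.log ((2/π) * |θ - θ₀|)| ≤ |Real.log (2/π)| + |Real.log (|θ - θ₀|)| := by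
          rw [Real.log_mul (by positivity) (ne_of_gt hs)]
          exact abs_add_le _ _
        rw [abs_of_nonneg (by positivity : (0:ℝ) ≤ |Real.log 2| + |Real.log (2/π)| + |Real.log (|θ - θ₀|)|)]
        linarith
    -- Step 2 : transfer to [0, 2π]
    have hperiod : ∀ θ : ℝ, G (θ - 2*π) = G θ := by
      intro θ
      have : Complex.exp (Complex.I * ((θ - 2*π : ℝ) : ℂ)) = Complex.exp (Complex.I * θ) := by
        push_cast
        rw [mul_sub, Complex.exp_sub]
        rw [show Complex.I * (2*(π:ℂ)) = 2*(π:ℂ)*Complex.I by ring, Complex.exp_two_pi_mul_I,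
          div_one]
      simp only [hGdef, this]
    have part1 : IntervalIntegrable G volume 0 (θ₀ + π) := by
      apply step1.mono_set
      apply Set.uIcc_subset_uIcc
      · rw [Set.mem_uIcc]; left; constructor <;> linarith
      · rw [Set.mem_uIcc]; left; constructor <;> linarith
    have part2 : IntervalIntegrable G volume (θ₀ + π) (2*π) := by
      have sub : IntervalIntegrable G volume (θ₀ - π) 0 := by
        apply step1.mono_set
        apply Set.uIcc_subset_uIcc
        · rw [Set.mem_uIcc]; left; constructor <;> linarith
        · rw [Set.mem_uIcc]; left; constructor <;> linarith
      have := sub.comp_sub_right (2*π)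
      have heq : (fun x => G (x - 2*π)) = G := funext hperiod
      rw [heq] at this
      rw [show θ₀ - π + 2*π = θ₀ + π by ring, show (0:ℝ) + 2*π = 2*π by ring] at this
      exact this
    exact part1.trans part2
  · -- |r| ≠ 1 : the function is continuous
    have hF : Continuous fun θ : ℝ => ‖(Complex.exp (Complex.I * θ) - r)‖ :=
      (continuous_norm.comp
        ((Complex.continuous_exp.comp (continuous_const.mul Complex.continuous_ofReal)).sub
          continuous_const))
    have hne : ∀ θ : ℝ, ‖(Complex.exp (Complex.I * θ) - r)‖ ≠ 0 := by
      intro θ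
      rw [ne_eq, norm_eq_zero, sub_eq_zero]
      intro hc
      exact h1 (by rw [← hc, absExpI])
    exact ((hF.log hne).abs).intervalIntegrable 0 (2*π)

lemma listSumIntegrable (L : List ℂ) :
    IntervalIntegrable (fun θ : ℝ =>
      (L.map (fun r => |Real.log (‖(Complex.exp (Complex.I * θ) - r)‖)|)).sum)
      volume 0 (2*Real.pi) := by
  induction L with
  | nil => simpa using intervalIntegrable_const (c := (0:ℝ)) (μ := volume) (a := 0) (b := 2*Real.pi)
  | cons r L ih =>
    simpa [List.map_cons, List.sum_cons] using (core' r).add ih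

lemma log_prod_list (f : ℂ → ℝ) (L : List ℂ) (h : ∀ a ∈ L, f a ≠ 0) :
    Real.log (L.map f).prod = (L.map fun a => Real.log (f a)).sum := by
  induction L with
  | nil => simp
  | cons a L ih =>
    have hprod : (L.map f).prod ≠ 0 := by
      apply List.prod_ne_zero
      intro hc
      obtain ⟨b, hb, hb0⟩ := List.mem_map.mp hc
      exact h b (List.mem_cons_of_mem a hb) hb0
    rw [List.map_cons, List.prod_cons, Real.log_mul (h a (List.mem_cons_self)) hprod,
      List.map_cons, List.sum_cons, ih (fun b hb => h b (List.mem_cons_of_mem a hb))]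

lemma abs_sum_list (f : ℂ → ℝ) (L : List ℂ) :
    |(L.map f).sum| ≤ (L.map fun a => |f a|).sum := by
  induction L with
  | nil => simp
  | cons a L ih =>
    simp only [List.map_cons, List.sum_cons]
    calc |f a + (L.map f).sum| ≤ |f a| + |(L.map f).sum| := abs_add_le _ _
      _ ≤ |f a| + (L.map fun a => |f a|).sum := by linarith

lemma countable_exp_eq (a : ℂ) : Set.Countable {θ : ℝ | Complex.exp (Complex.I * θ) = a} := by
  rcases Set.eq_empty_or_nonempty {θ : ℝ | Complex.exp (Complex.I * θ) = a} with h | ⟨θs, hθs⟩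
  · rw [h]; exact Set.countable_empty
  · apply Set.Countable.mono ?_ (Set.countable_range fun n : ℤ => θs + n * (2*Real.pi))
    intro θ hθ
    have : Complex.exp (Complex.I * θ) = Complex.exp (Complex.I * θs) := by
      rw [hθ, hθs]
    rw [Complex.exp_eq_exp_iff_exists_int] at this
    obtain ⟨n, hn⟩ := this
    refine ⟨n, ?_⟩
    have : (θ : ℂ) = θs + n * (2*Real.pi) := by
      have h2 : Complex.I * Complex.I = -1 := Complex.I_mul_I
      push_cast at hn ⊢
      linear_combination (-Complex.I) * hn + ((θ:ℂ) - θs - 2*n*π) * Complex.I_sq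
    exact_mod_cast (Complex.ofReal_inj.mp (by push_cast; exact this.symm))

theorem stmt_7 (N : ℕ) (c : ℤ → ℂ)
    (hne : ∃ j ∈ Finset.Icc (-(N:ℤ)) (N:ℤ), c j ≠ 0) :
    IntervalIntegrable
      (fun θ : ℝ =>
        |Real.log (‖(∑ j ∈ Finset.Icc (-(N:ℤ)) (N:ℤ),
            c j * (Complex.exp (Complex.I * θ)) ^ j)‖)|)
      MeasureTheory.volume 0 (2*Real.pi) := by
  set Q : Polynomial ℂ :=
    ∑ k ∈ Finset.range (2*N+1), Polynomial.C (c ((k:ℤ) - N)) * Polynomial.X ^ k with hQ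
  have hcoeff : ∀ m : ℕ, Q.coeff m = if m ∈ Finset.range (2*N+1) then c ((m:ℤ) - N) else 0 := by
    intro m
    rw [hQ, Polynomial.finset_sum_coeff]
    simp only [Polynomial.coeff_C_mul, Polynomial.coeff_X_pow, mul_ite, mul_one, mul_zero]
    simp
  -- Q is nonzero
  have hQ0 : Q ≠ 0 := by
    obtain ⟨j, hjmem, hj0⟩ := hne
    rw [Finset.mem_Icc] at hjmem
    intro h
    apply hj0
    have hm : (((j + N).toNat : ℤ)) = j + N := Int.toNat_of_nonneg (by linarith [hjmem.1])
    have := hcoeff (j + N).toNat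
    rw [h, Polynomial.coeff_zero] at this
    rw [if_pos] at this
    · rw [hm] at this
      simpa using this.symm
    · rw [Finset.mem_range]
      omega
  have hlc : Q.leadingCoeff ≠ 0 := Polynomial.leadingCoeff_ne_zero.mpr hQ0
  -- evaluation and link with the trigonometric sum
  have hw0 : ∀ θ : ℝ, Complex.exp (Complex.I * θ) ≠ 0 := fun θ => Complex.exp_ne_zero _
  have hlink : ∀ θ : ℝ,
      ‖(∑ j ∈ Finset.Icc (-(N:ℤ)) (N:ℤ), c j * (Complex.exp (Complex.I * θ)) ^ j)‖
        = ‖(Q.eval (Complex.exp (Complex.I * θ)))‖ := by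
    intro θ
    set w := Complex.exp (Complex.I * θ) with hwdef
    have heval : Q.eval w = ∑ k ∈ Finset.range (2*N+1), c ((k:ℤ) - N) * w ^ k := by
      rw [hQ]
      simp [Polynomial.eval_finset_sum]
    have hswap : Q.eval w = w ^ N * ∑ j ∈ Finset.Icc (-(N:ℤ)) (N:ℤ), c j * w ^ j := by
      rw [heval, Finset.mul_sum]
      refine Finset.sum_nbij' (fun k => (k : ℤ) - N) (fun j => (j + N).toNat) ?_ ?_ ?_ ?_ ?_
      · intro k hk
        rw [Finset.mem_range] at hk
        beta_reduce
        rw [Finset.mem_Icc]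
        omega
      · intro j hj
        rw [Finset.mem_Icc] at hj
        beta_reduce
        rw [Finset.mem_range]
        omega
      · intro k hk
        rw [Finset.mem_range] at hk
        beta_reduce
        omega
      · intro j hj
        rw [Finset.mem_Icc] at hj
        beta_reduce
        omega
      · intro k hk
        rw [Finset.mem_range] at hk
        beta_reduce
        have hzp : w ^ (k:ℕ) = w ^ (N:ℕ) * w ^ ((k:ℤ) - N) := by
          rw [← zpow_natCast w N, ← zpow_natCast w k, ← zpow_add₀ (hw0 θ)]
          congr 1
          omega
        rw [hzp]
        ring
    rw [hswap, norm_mul, norm_pow, hwdef, absExpI, one_pow, one_mul]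
  -- factorisation over roots
  have hroots : Q.roots.card = Q.natDegree :=
    (Polynomial.splits_iff_card_roots).mp (IsAlgClosed.splits Q)
  have hfac := Polynomial.C_leadingCoeff_mul_prod_multiset_X_sub_C hroots
  set L : List ℂ := Q.roots.toList with hL
  have hLcoe : (L : Multiset ℂ) = Q.roots := Multiset.coe_toList _
  have hevalfac : ∀ w : ℂ, ‖(Q.eval w)‖
      = ‖Q.leadingCoeff‖ * ((L.map fun a => ‖(w - a)‖).prod) := by
    intro w
    conv_lhs => rw [← hfac]
    rw [Polynomial.eval_mul, Polynomial.eval_C, norm_mul]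
    congr 1
    rw [Polynomial.eval_multiset_prod, Multiset.map_map, ← hLcoe]
    rw [Multiset.map_coe, Multiset.prod_coe]
    rw [List.norm_prod, List.map_map]
    apply congrArg
    apply List.map_congr_left
    intro a _
    simp
  -- measurability
  have hmeas : AEStronglyMeasurable
      (fun θ : ℝ =>
        |Real.log (‖(∑ j ∈ Finset.Icc (-(N:ℤ)) (N:ℤ),
            c j * (Complex.exp (Complex.I * θ)) ^ j)‖)|)
      (volume.restrict (Set.uIoc 0 (2*Real.pi))) := by
    have hfc : Continuous (fun θ : ℝ =>
        ∑ j ∈ Finset.Icc (-(N:ℤ)) (N:ℤ), c j * (Complex.exp (Complex.I * θ)) ^ j) := by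
      apply continuous_finset_sum
      intro j _
      exact continuous_const.mul
        (((Complex.continuous_exp.comp (continuous_const.mul Complex.continuous_ofReal))).zpow₀ j
          (fun θ => Or.inl (hw0 θ)))
    exact ((Real.measurable_log.comp (continuous_norm.comp hfc).measurable).abs
      ).aestronglyMeasurable
  -- a.e. bound by integrable function
  have hbad : ∀ᵐ θ : ℝ ∂(volume.restrict (Set.uIoc 0 (2*Real.pi))),
      ∀ a ∈ L, Complex.exp (Complex.I * θ) ≠ a := by
    apply ae_restrict_of_ae
    have hcnt : Set.Countable {θ : ℝ | ¬ ∀ a ∈ L, Complex.exp (Complex.I * θ) ≠ a} := by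
      have hsub : {θ : ℝ | ¬ ∀ a ∈ L, Complex.exp (Complex.I * θ) ≠ a}
          ⊆ ⋃ a ∈ {b : ℂ | b ∈ L}, {θ : ℝ | Complex.exp (Complex.I * θ) = a} := by
        intro θ hθ
        simp only [Set.mem_setOf_eq, not_forall, not_not] at hθ
        obtain ⟨a, ha, haeq⟩ := hθ
        exact Set.mem_biUnion ha haeq
      exact Set.Countable.mono hsub
        (Set.Countable.biUnion ((List.finite_toSet L).countable) (fun a _ => countable_exp_eq a))
    have := hcnt.measure_zero (μ := volume)
    rw [ae_iff]
    exact this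
  have hgint : IntervalIntegrable
      (fun θ : ℝ => |Real.log (‖Q.leadingCoeff‖)|
        + (L.map (fun r => |Real.log (‖(Complex.exp (Complex.I * θ) - r)‖)|)).sum)
      volume 0 (2*Real.pi) :=
    intervalIntegrable_const.add (listSumIntegrable L)
  apply hgint.mono_fun hmeas
  filter_upwards [hbad] with θ hθ
  rw [Real.norm_eq_abs, Real.norm_eq_abs, abs_abs]
  set w := Complex.exp (Complex.I * θ) with hwdef
  have hfa : ∀ a ∈ L, ‖(w - a)‖ ≠ 0 := by
    intro a ha
    rw [ne_eq, norm_eq_zero, sub_eq_zero]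
    exact hθ a ha
  have h1 : ‖(∑ j ∈ Finset.Icc (-(N:ℤ)) (N:ℤ), c j * w ^ j)‖
      = ‖Q.leadingCoeff‖ * ((L.map fun a => ‖(w - a)‖).prod) := by
    rw [hwdef, hlink θ, hevalfac]
  rw [h1, Real.log_mul (by rwa [ne_eq, norm_eq_zero] : ‖Q.leadingCoeff‖ ≠ 0) ?hpne]
  case hpne =>
    apply List.prod_ne_zero
    intro hc
    obtain ⟨b, hb, hb0⟩ := List.mem_map.mp hc
    exact hfa b hb hb0
  rw [log_prod_list _ L hfa]
  have tri := abs_add_le (Real.log (‖Q.leadingCoeff‖))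
    ((L.map fun a => Real.log (‖(w - a)‖)).sum)
  have tri2 := abs_sum_list (fun a => Real.log (‖(w - a)‖)) L
  have hnn : (0:ℝ) ≤ |Real.log (‖Q.leadingCoeff‖)|
      + (L.map (fun r => |Real.log (‖(w - r)‖)|)).sum := by
    apply add_nonneg (abs_nonneg _)
    apply List.sum_nonneg
    intro x hx
    obtain ⟨b, _, hb⟩ := List.mem_map.mp hx
    rw [← hb]; exact abs_nonneg _
  rw [abs_of_nonneg hnn]
  calc |Real.log (‖Q.leadingCoeff‖)
        + (L.map fun a => Real.log (‖(w - a)‖)).sum|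
      ≤ |Real.log (‖Q.leadingCoeff‖)|
        + |(L.map fun a => Real.log (‖(w - a)‖)).sum| := tri
    _ ≤ |Real.log (‖Q.leadingCoeff‖)|
        + (L.map (fun r => |Real.log (‖(w - r)‖)|)).sum := by linarith
end

section
/- Let α > 0 and let f : ℝ → ℝ be continuous with f(θ) > 0 for all θ ∈ [0,2π], and suppose f is not constant on [0,2π], i.e. there exist θ₁, θ₂ ∈ [0,2π] with f(θ₁) ≠ f(θ₂). For η ≥ 0 define I(η) = ∫₀^{2π} (1+η·f(θ))^{-α} dθ and J(η) = ∫₀^{2π} f(θ)·(1+η·f(θ))^{-α} dθ. Then the function η ↦ J(η)/I(η) is strictly decreasing on [0,∞). -/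
open MeasureTheory Set ENNReal

/-- Key strict inequality for the kernel. -/
lemma key_lt_aux (α a b x y : ℝ) (hα : 0 < α) (ha : 0 ≤ a) (hab : a < b)
    (hx : 0 < x) (hxy : x < y) :
    (1 + a*x) ^ (-α) * (1 + b*y) ^ (-α) < (1 + b*x) ^ (-α) * (1 + a*y) ^ (-α) := by
  have hy : 0 < y := hx.trans hxy
  have hb : 0 ≤ b := ha.trans hab.le
  have hA : 0 < 1 + a*x := by nlinarith
  have hB : 0 < 1 + b*x := by nlinarith
  have hC : 0 < 1 + a*y := by nlinarith
  have hD : 0 < 1 + b*y := by nlinarith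
  rw [Real.rpow_neg hA.le, Real.rpow_neg hB.le, Real.rpow_neg hC.le, Real.rpow_neg hD.le,
    ← mul_inv, ← mul_inv]
  have h1 : 0 < (1 + b*x) ^ α * (1 + a*y) ^ α := by positivity
  have h2 : (1 + b*x) ^ α * (1 + a*y) ^ α < (1 + a*x) ^ α * (1 + b*y) ^ α := by
    rw [← Real.mul_rpow hB.le hC.le, ← Real.mul_rpow hA.le hD.le]
    apply Real.rpow_lt_rpow (by positivity) _ hα
    nlinarith
  exact inv_strictAnti₀ h1 h2

lemma kernel_nonneg_aux (α a b x y : ℝ) (hα : 0 < α) (ha : 0 ≤ a) (hab : a < b)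
    (hx : 0 < x) (hy : 0 < y) :
    0 ≤ (x - y) * ((1+a*x)^(-α) * (1+b*y)^(-α) - (1+b*x)^(-α) * (1+a*y)^(-α)) := by
  rcases lt_trichotomy x y with h|h|h
  · have := key_lt_aux α a b x y hα ha hab hx h
    nlinarith
  · subst h; simp
  · have := key_lt_aux α a b y x hα ha hab hy h
    nlinarith

lemma kernel_pos_aux (α a b x y : ℝ) (hα : 0 < α) (ha : 0 ≤ a) (hab : a < b)
    (hx : 0 < x) (hy : 0 < y) (hne : x ≠ y) :
    0 < (x - y) * ((1+a*x)^(-α) * (1+b*y)^(-α) - (1+b*x)^(-α) * (1+a*y)^(-α)) := by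
  rcases lt_trichotomy x y with h|h|h
  · have := key_lt_aux α a b x y hα ha hab hx h
    nlinarith
  · exact absurd h hne
  · have := key_lt_aux α a b y x hα ha hab hy h
    nlinarith

theorem stmt_13 (α : ℝ) (hα : 0 < α) (f : ℝ → ℝ) (hf : Continuous f)
    (hpos : ∀ θ ∈ Set.Icc (0:ℝ) (2*Real.pi), 0 < f θ)
    (hnc : ∃ θ₁ ∈ Set.Icc (0:ℝ) (2*Real.pi), ∃ θ₂ ∈ Set.Icc (0:ℝ) (2*Real.pi), f θ₁ ≠ f θ₂) :
    StrictAntiOn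
      (fun η => (∫ θ in (0:ℝ)..(2*Real.pi), f θ * (1 + η * f θ) ^ (-α)) /
                (∫ θ in (0:ℝ)..(2*Real.pi), (1 + η * f θ) ^ (-α)))
      (Set.Ici (0:ℝ)) := by
  have hπ : (0:ℝ) < 2 * Real.pi := by positivity
  intro a ha b hb hab
  simp only [Set.mem_Ici] at ha hb
  set Ic := Set.Icc (0:ℝ) (2*Real.pi) with hIc
  set S := Set.Ioc (0:ℝ) (2*Real.pi) with hSdef
  have hSIc : S ⊆ Ic := Set.Ioc_subset_Icc_self
  -- base positivity
  have hbase : ∀ η : ℝ, 0 ≤ η → ∀ θ ∈ Ic, 0 < 1 + η * f θ := by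
    intro η hη θ hθ
    have := hpos θ hθ
    nlinarith
  -- continuity of the integrands on Ic
  have hgcont : ∀ η : ℝ, 0 ≤ η → ContinuousOn (fun θ => (1 + η * f θ) ^ (-α)) Ic := by
    intro η hη
    apply ContinuousOn.rpow_const
    · exact continuousOn_const.add (continuousOn_const.mul hf.continuousOn)
    · intro θ hθ; exact Or.inl (ne_of_gt (hbase η hη θ hθ))
  have hfgcont : ∀ η : ℝ, 0 ≤ η → ContinuousOn (fun θ => f θ * (1 + η * f θ) ^ (-α)) Ic :=
    fun η hη => hf.continuousOn.mul (hgcont η hη)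
  -- interval integrability
  have huIcc : Set.uIcc (0:ℝ) (2*Real.pi) = Ic := Set.uIcc_of_le hπ.le
  have hIint : ∀ η : ℝ, 0 ≤ η →
      IntervalIntegrable (fun θ => (1 + η * f θ) ^ (-α)) volume 0 (2*Real.pi) := by
    intro η hη
    exact ((hgcont η hη).mono (le_of_eq huIcc)).intervalIntegrable
  -- positivity of the denominators
  have hI : ∀ η : ℝ, 0 ≤ η → 0 < ∫ θ in (0:ℝ)..(2*Real.pi), (1 + η * f θ) ^ (-α) := by
    intro η hη
    apply intervalIntegral.intervalIntegral_pos_of_pos_on (hIint η hη)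
    · intro θ hθ
      exact Real.rpow_pos_of_pos (hbase η hη θ ⟨hθ.1.le, hθ.2.le⟩) _
    · exact hπ
  -- reduce to cross-multiplied inequality
  simp only
  rw [div_lt_div_iff₀ (hI b (ha.trans hab.le)) (hI a ha)]
  -- convert to set integrals over S
  rw [intervalIntegral.integral_of_le hπ.le, intervalIntegral.integral_of_le hπ.le,
    intervalIntegral.integral_of_le hπ.le, intervalIntegral.integral_of_le hπ.le]
  set μ := volume.restrict S with hμdef
  have hb' : 0 ≤ b := ha.trans hab.le
  set A : ℝ → ℝ := fun θ => (1 + a * f θ) ^ (-α) with hA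
  set B : ℝ → ℝ := fun θ => (1 + b * f θ) ^ (-α) with hB
  -- products of integrals as double integrals
  have e1 : (∫ θ, f θ * B θ ∂μ) * (∫ θ, A θ ∂μ)
      = ∫ p : ℝ × ℝ, (f p.1 * B p.1) * A p.2 ∂(μ.prod μ) :=
    (integral_prod_mul (fun θ => f θ * B θ) A).symm
  have e2 : (∫ θ, f θ * A θ ∂μ) * (∫ θ, B θ ∂μ)
      = ∫ p : ℝ × ℝ, (f p.1 * A p.1) * B p.2 ∂(μ.prod μ) :=
    (integral_prod_mul (fun θ => f θ * A θ) B).symm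
  rw [e1, e2]
  -- integrability on the product
  have hprodint : ∀ (F G : ℝ → ℝ), ContinuousOn F Ic → ContinuousOn G Ic →
      Integrable (fun p : ℝ × ℝ => F p.1 * G p.2) (μ.prod μ) := by
    intro F G hF hG
    have hc : ContinuousOn (fun p : ℝ × ℝ => F p.1 * G p.2) (Ic ×ˢ Ic) :=
      (hF.comp continuous_fst.continuousOn (fun p hp => hp.1)).mul
        (hG.comp continuous_snd.continuousOn (fun p hp => hp.2))
    have hint : IntegrableOn (fun p : ℝ × ℝ => F p.1 * G p.2) (Ic ×ˢ Ic) volume :=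
      hc.integrableOn_compact (isCompact_Icc.prod isCompact_Icc)
    have hint2 : IntegrableOn (fun p : ℝ × ℝ => F p.1 * G p.2) (S ×ˢ S) volume :=
      hint.mono_set (Set.prod_mono hSIc hSIc)
    rwa [IntegrableOn, Measure.volume_eq_prod, ← Measure.prod_restrict] at hint2
  have int1 : Integrable (fun p : ℝ × ℝ => (f p.1 * A p.1) * B p.2) (μ.prod μ) :=
    hprodint (fun θ => f θ * A θ) B (hfgcont a ha) (hgcont b hb')
  have int2 : Integrable (fun p : ℝ × ℝ => (f p.1 * B p.1) * A p.2) (μ.prod μ) :=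
    hprodint (fun θ => f θ * B θ) A (hfgcont b hb') (hgcont a ha)
  rw [← sub_pos, ← integral_sub int1 int2]
  set K : ℝ × ℝ → ℝ := fun p => (f p.1 * A p.1) * B p.2 - (f p.1 * B p.1) * A p.2 with hK
  set L : ℝ × ℝ → ℝ := fun p => (f p.1 - f p.2) * (A p.1 * B p.2 - B p.1 * A p.2) with hL
  -- symmetrization: ∫ K = ∫ K ∘ swap
  have hswap : ∫ p, K p.swap ∂(μ.prod μ) = ∫ p, K p ∂(μ.prod μ) :=
    integral_prod_swap K
  -- K + K ∘ swap = L
  have hKL : ∀ p : ℝ × ℝ, K p + K p.swap = L p := by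
    intro p
    simp only [hK, hL, hA, hB, Prod.fst_swap, Prod.snd_swap]
    ring
  -- integrability of K and K ∘ swap
  have intK : Integrable K (μ.prod μ) := int1.sub int2
  have intKs : Integrable (fun p : ℝ × ℝ => K p.swap) (μ.prod μ) := by
    have h1 : Integrable (fun p : ℝ × ℝ => B p.1 * (f p.2 * A p.2)) (μ.prod μ) :=
      hprodint B (fun θ => f θ * A θ) (hgcont b hb') (hfgcont a ha)
    have h2 : Integrable (fun p : ℝ × ℝ => A p.1 * (f p.2 * B p.2)) (μ.prod μ) :=
      hprodint A (fun θ => f θ * B θ) (hgcont a ha) (hfgcont b hb')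
    have heq : (fun p : ℝ × ℝ => K p.swap)
        = fun p : ℝ × ℝ => B p.1 * (f p.2 * A p.2) - A p.1 * (f p.2 * B p.2) := by
      funext p; simp only [hK, Prod.fst_swap, Prod.snd_swap]; ring
    rw [heq]
    exact h1.sub h2
  have intL : Integrable L (μ.prod μ) := by
    have : L = fun p => K p + K p.swap := by funext p; rw [hKL p]
    rw [this]; exact intK.add intKs
  -- ∫ L = 2 * ∫ K
  have hLK : ∫ p, L p ∂(μ.prod μ) = 2 * ∫ p, K p ∂(μ.prod μ) := by
    have : ∫ p, L p ∂(μ.prod μ) = ∫ p, (K p + K p.swap) ∂(μ.prod μ) := by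
      apply integral_congr_ae
      filter_upwards with p
      exact (hKL p).symm
    rw [this, integral_add intK intKs, hswap]
    ring
  -- positivity of ∫ L
  have hLpos : 0 < ∫ p, L p ∂(μ.prod μ) := by
    have hprodμ : μ.prod μ = (volume : Measure (ℝ × ℝ)).restrict (S ×ˢ S) := by
      rw [hμdef, Measure.prod_restrict, ← Measure.volume_eq_prod]
    rw [hprodμ]
    have hmeasS : MeasurableSet (S ×ˢ S) := (measurableSet_Ioc.prod measurableSet_Ioc)
    -- a.e. nonnegativity
    have hnonneg : 0 ≤ᵐ[(volume : Measure (ℝ × ℝ)).restrict (S ×ˢ S)] L := by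
      filter_upwards [ae_restrict_mem hmeasS] with p hp
      have h1 : p.1 ∈ Ic := hSIc hp.1
      have h2 : p.2 ∈ Ic := hSIc hp.2
      simpa [hL, hA, hB] using
        kernel_nonneg_aux α a b (f p.1) (f p.2) hα ha hab (hpos _ h1) (hpos _ h2)
    have hintL : IntegrableOn L (S ×ˢ S) volume := by rwa [IntegrableOn, ← hprodμ]
    rw [setIntegral_pos_iff_support_of_nonneg_ae hnonneg hintL]
    -- find an open set of positivity
    obtain ⟨θ₁, hθ₁, θ₂, hθ₂, hne⟩ := hnc
    have hLcont : ContinuousOn L (Ic ×ˢ Ic) := by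
      have hfc1 : ContinuousOn (fun p : ℝ × ℝ => f p.1) (Ic ×ˢ Ic) :=
        hf.continuousOn.comp continuous_fst.continuousOn (fun p hp => hp.1)
      have hfc2 : ContinuousOn (fun p : ℝ × ℝ => f p.2) (Ic ×ˢ Ic) :=
        hf.continuousOn.comp continuous_snd.continuousOn (fun p hp => hp.2)
      have hAc1 : ContinuousOn (fun p : ℝ × ℝ => A p.1) (Ic ×ˢ Ic) :=
        (hgcont a ha).comp continuous_fst.continuousOn (fun p hp => hp.1)
      have hAc2 : ContinuousOn (fun p : ℝ × ℝ => A p.2) (Ic ×ˢ Ic) :=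
        (hgcont a ha).comp continuous_snd.continuousOn (fun p hp => hp.2)
      have hBc1 : ContinuousOn (fun p : ℝ × ℝ => B p.1) (Ic ×ˢ Ic) :=
        (hgcont b hb').comp continuous_fst.continuousOn (fun p hp => hp.1)
      have hBc2 : ContinuousOn (fun p : ℝ × ℝ => B p.2) (Ic ×ˢ Ic) :=
        (hgcont b hb').comp continuous_snd.continuousOn (fun p hp => hp.2)
      exact (hfc1.sub hfc2).mul ((hAc1.mul hBc2).sub (hBc1.mul hAc2))
    have hptmem : (θ₁, θ₂) ∈ Ic ×ˢ Ic := ⟨hθ₁, hθ₂⟩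
    have hLpt : 0 < L (θ₁, θ₂) := by
      simpa [hL, hA, hB] using
        kernel_pos_aux α a b (f θ₁) (f θ₂) hα ha hab (hpos _ hθ₁) (hpos _ hθ₂) hne
    -- get an open neighborhood where L > L (θ₁,θ₂)/2 (within Ic ×ˢ Ic)
    have hev : ∀ᶠ p in nhdsWithin (θ₁, θ₂) (Ic ×ˢ Ic), 0 < L p :=
      (hLcont (θ₁, θ₂) hptmem).eventually (eventually_gt_nhds hLpt) |>.mono
        (fun p hp => hp)
    rw [eventually_nhdsWithin_iff] at hev
    obtain ⟨O, hOsub, hOopen, hOmem⟩ := eventually_nhds_iff.mp hev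
    -- W := O ∩ (Ioo 0 2π ×ˢ Ioo 0 2π) is open, nonempty, and ⊆ support L ∩ S ×ˢ S
    set Io := Set.Ioo (0:ℝ) (2*Real.pi) with hIo
    have hIoS : Io ⊆ S := Set.Ioo_subset_Ioc_self
    set W := O ∩ (Io ×ˢ Io) with hW
    have hWopen : IsOpen W := hOopen.inter ((isOpen_Ioo).prod (isOpen_Ioo))
    have hWne : W.Nonempty := by
      have hcl : (θ₁, θ₂) ∈ closure (Io ×ˢ Io) := by
        rw [closure_prod_eq, closure_Ioo (ne_of_lt hπ)]
        exact ⟨hθ₁, hθ₂⟩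
      exact mem_closure_iff.mp hcl O hOopen hOmem
    have hWsub : W ⊆ Function.support L ∩ (S ×ˢ S) := by
      intro p hp
      have hpS : p ∈ S ×ˢ S := ⟨hIoS hp.2.1, hIoS hp.2.2⟩
      have hpIc : p ∈ Ic ×ˢ Ic := ⟨hSIc hpS.1, hSIc hpS.2⟩
      have := hOsub p hp.1 hpIc
      exact ⟨ne_of_gt this, hpS⟩
    calc (0:ℝ≥0∞) < volume W := hWopen.measure_pos volume hWne
      _ ≤ volume (Function.support L ∩ S ×ˢ S) := measure_mono hWsub
  -- conclude
  have : ∫ p, K p ∂(μ.prod μ) > 0 := by linarith [hLK ▸ hLpos]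
  convert this using 2
end
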